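/- Fix x ∈ E and ν₀ ∈ (E →L[ℝ] ℝ), and define the adjoint covector ν : ℝ → (E →L[ℝ] ℝ) along the orbit of x by ν t := ν₀ ∘ D(f (−t))(f t x). Then t ↦ ν t is differentiable and satisfies the homogeneous adjoint equation d/dt (ν t) = − (ν t) ∘ DF(f t x) for all t ∈ ℝ. -/

import Mathlib

open Set Metric Filter MeasureTheory intervalIntegral ContinuousLinearMap
open scoped Topology NNReal ENNReal

section aux

variable {E : Type*} [NormedAddCommGroup E] [NormedSpace ℝ E] [FiniteDimensional ℝ E]

omit [NormedSpace ℝ E] [FiniteDimensional ℝ E] in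
private lemma lipschitzOnWith_weaken {K K' : ℝ≥0} {f : E → E} {s : Set E}
    (h : LipschitzOnWith K f s) (hK : K ≤ K') : LipschitzOnWith K' f s := fun x hx y hy =>
  (h hx hy).trans <| by
    have : (K : ℝ≥0∞) ≤ K' := by exact_mod_cast hK
    gcongr

/-- Measurability in the time parameter of the space-derivative of a flow. -/
theorem stronglyMeasurable_fderiv_param (f : ℝ → E → E)
    (hcont : ∀ z : E, Continuous fun τ : ℝ => f τ z)
    (hdiff : ∀ τ : ℝ, ∀ z : E, DifferentiableAt ℝ (f τ) z) (y : E) :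
    MeasureTheory.StronglyMeasurable (fun τ : ℝ => fderiv ℝ (f τ) y) := by
  classical
  set b := Module.finBasis ℝ E with hb
  set Φ : (Fin (Module.finrank ℝ E) → E) → (E →L[ℝ] E) := fun w =>
    ∑ i, (ContinuousLinearMap.smulRightL ℝ E E (LinearMap.toContinuousLinearMap (b.coord i)))
      (w i) with hΦ
  have hΦc : Continuous Φ := by
    refine continuous_finset_sum _ fun i _ => ?_
    exact (ContinuousLinearMap.smulRightL ℝ E E _).continuous.comp (continuous_apply i)
  have hΦA : ∀ T : E →L[ℝ] E, (Φ fun i => T (b i)) = T := by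
    intro T
    ext v
    have h1 : (Φ fun i => T (b i)) v = ∑ i, b.repr v i • T (b i) := by
      simp [hΦ, ContinuousLinearMap.smulRightL, Module.Basis.coord_apply]
    rw [h1]
    have h2 : ∑ i, b.repr v i • T (b i) = T (∑ i, b.repr v i • b i) := by
      simp only [map_sum, _root_.map_smul]
    rw [h2, b.sum_repr]
  set G : ℕ → ℝ → E →L[ℝ] E := fun n τ =>
    Φ fun i => (n : ℝ) • (f τ (y + (n : ℝ)⁻¹ • b i) - f τ y) with hG
  have hGc : ∀ n : ℕ, Continuous (G n) := by
    intro n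
    apply hΦc.comp
    exact continuous_pi fun i => (((hcont _).sub (hcont y)).const_smul _)
  have key : ∀ (τ : ℝ) (i : Fin (Module.finrank ℝ E)),
      Tendsto (fun n : ℕ => (n : ℝ) • (f τ (y + (n : ℝ)⁻¹ • b i) - f τ y))
        atTop (𝓝 (fderiv ℝ (f τ) y (b i))) := by
    intro τ i
    have h2 : HasDerivAt (fun h : ℝ => y + h • b i) (b i) 0 := by
      simpa using ((hasDerivAt_id (0 : ℝ)).smul_const (b i)).const_add y
    have h1 : HasFDerivAt (f τ) (fderiv ℝ (f τ) y) ((fun h : ℝ => y + h • b i) 0) := by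
      simpa using (hdiff τ y).hasFDerivAt
    have hline : HasDerivAt (fun h : ℝ => f τ (y + h • b i)) (fderiv ℝ (f τ) y (b i)) 0 :=
      h1.comp_hasDerivAt 0 h2
    have hs := hasDerivAt_iff_tendsto_slope.1 hline
    have hseq : Tendsto (fun n : ℕ => (n : ℝ)⁻¹) atTop (𝓝[≠] (0 : ℝ)) := by
      refine tendsto_nhdsWithin_of_tendsto_nhds_of_eventually_within _
        tendsto_inv_atTop_nhds_zero_nat ?_
      filter_upwards [eventually_gt_atTop 0] with n hn
      exact inv_ne_zero (by exact_mod_cast hn.ne')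
    have := hs.comp hseq
    refine this.congr fun n => ?_
    simp only [Function.comp_apply, slope_def_module]
    rw [sub_zero, inv_inv]
    congr 1
    simp
  have htend : ∀ τ, Tendsto (fun n => G n τ) atTop (𝓝 (fderiv ℝ (f τ) y)) := by
    intro τ
    rw [← hΦA (fderiv ℝ (f τ) y)]
    exact (hΦc.tendsto _).comp (tendsto_pi_nhds.2 fun i => key τ i)
  exact stronglyMeasurable_of_tendsto atTop (fun n => (hGc n).stronglyMeasurable)
    (tendsto_pi_nhds.2 htend)


/-- One-sided core lemma: the time derivative (from the right, at time `0`) of the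
space-derivative of the flow is `DF`. -/
theorem flow_fderiv_hasDerivWithinAt_Ici (F : E → E) (hF : ContDiff ℝ 2 F)
    (f : ℝ → E → E) (hf0 : ∀ x : E, f 0 x = x)
    (hflow : ∀ t : ℝ, ∀ x : E, HasDerivAt (fun τ : ℝ => f τ x) (F (f t x)) t)
    (hfC2 : ∀ t : ℝ, ContDiff ℝ 2 (f t)) (y₀ : E) :
    HasDerivWithinAt (fun s => fderiv ℝ (f s) y₀) (fderiv ℝ F y₀) (Set.Ici 0) 0 := by
  have hct : ∀ z : E, Continuous fun τ : ℝ => f τ z := fun z =>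
    continuous_iff_continuousAt.2 fun τ => (hflow τ z).continuousAt
  have hFc : Continuous F := hF.continuous
  have hFd : Differentiable ℝ F := hF.differentiable two_ne_zero
  have hfd : ∀ s : ℝ, Differentiable ℝ (f s) := fun s => (hfC2 s).differentiable two_ne_zero
  set c : ℝ → E := fun τ => f τ y₀ with hc
  have hcc : Continuous c := hct y₀
  obtain ⟨r₀, hr₀⟩ := isCompact_Icc.exists_bound_of_continuousOn (hcc.continuousOn (s := Icc 0 1))
  set r : ℝ := max r₀ 0 with hrdef
  have hr0 : 0 ≤ r := le_max_right _ _
  have hr : ∀ τ ∈ Icc (0:ℝ) 1, ‖c τ‖ ≤ r := fun τ hτ => (hr₀ τ hτ).trans (le_max_left _ _)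
  set R : ℝ := r + 2 with hRdef
  -- Lipschitz constant for `F` on the big ball
  obtain ⟨M, hM⟩ := (isCompact_closedBall (0:E) R).exists_bound_of_continuousOn
    ((hF.continuous_fderiv two_ne_zero).continuousOn)
  set L : ℝ≥0 := Real.toNNReal M with hLdef
  have hMF : ∀ z ∈ closedBall (0:E) R, ‖fderiv ℝ F z‖₊ ≤ L := by
    intro z hz
    rw [← NNReal.coe_le_coe, coe_nnnorm]
    exact (hM z hz).trans (Real.le_coe_toNNReal M)
  have hLip : LipschitzOnWith L F (closedBall (0:E) R) :=
    Convex.lipschitzOnWith_of_nnnorm_fderiv_le (fun z _ => hFd z) hMF (convex_closedBall _ _)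
  -- the radius ε
  set ε : ℝ := min 1 (Real.exp (-(L:ℝ)) / 2) with hεdef
  have hε0 : 0 < ε := lt_min one_pos (by positivity)
  have hε1 : ε ≤ 1 := min_le_left _ _
  have hεe : ε * Real.exp (L:ℝ) ≤ 1/2 := by
    have h2 : Real.exp (-(L:ℝ)) * Real.exp (L:ℝ) = 1 := by rw [← Real.exp_add]; simp
    calc ε * Real.exp (L:ℝ) ≤ Real.exp (-(L:ℝ)) / 2 * Real.exp (L:ℝ) :=
          mul_le_mul_of_nonneg_right (min_le_right _ _) (Real.exp_nonneg _)
      _ = 1/2 := by rw [div_mul_eq_mul_div, h2]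
  -- Grönwall comparison with the central trajectory
  have gron : ∀ y ∈ closedBall y₀ ε, ∀ T ∈ Icc (0:ℝ) 1,
      (∀ τ ∈ Icc 0 T, f τ y ∈ closedBall (0:E) R) →
      ∀ τ ∈ Icc 0 T, dist (f τ y) (c τ) ≤ ε * Real.exp ((L:ℝ) * τ) := by
    intro y hy T hT hmem τ hτ
    have hcmem : ∀ t ∈ Ico (0:ℝ) T, c t ∈ closedBall (0:E) R := by
      intro t ht
      rw [mem_closedBall, dist_zero_right]
      exact (hr t ⟨ht.1, ht.2.le.trans hT.2⟩).trans (by rw [hRdef]; linarith)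
    have hstart : dist (f 0 y) (c 0) ≤ ε := by
      simpa [hc, hf0] using mem_closedBall.1 hy
    have := dist_le_of_trajectories_ODE_of_mem
      (v := fun _ : ℝ => F) (s := fun _ : ℝ => closedBall (0:E) R)
      (K := L) (f := fun τ => f τ y) (g := c) (a := 0) (b := T) (δ := ε)
      (fun _ _ => hLip)
      (hct y).continuousOn (fun t _ => (hflow t y).hasDerivWithinAt)
      (fun t ht => hmem t ⟨ht.1, ht.2.le⟩)
      hcc.continuousOn (fun t _ => (hflow t y₀).hasDerivWithinAt)
      hcmem hstart τ hτ
    simpa using this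
  -- containment bootstrap
  have contain : ∀ y ∈ closedBall y₀ ε, ∀ s ∈ Icc (0:ℝ) 1, f s y ∈ closedBall (0:E) (r+1) := by
    intro y hy
    set S : Set ℝ := {s | s ∈ Icc (0:ℝ) 1 ∧ ∀ τ ∈ Icc 0 s, f τ y ∈ closedBall (0:E) (r+1)}
      with hSdef
    have hy₀r : ‖y₀‖ ≤ r := by simpa [hc, hf0] using hr 0 ⟨le_refl 0, zero_le_one⟩
    have hymem : y ∈ closedBall (0:E) (r+1) := by
      rw [mem_closedBall, dist_zero_right]
      have : ‖y - y₀‖ ≤ ε := by rw [← dist_eq_norm]; exact mem_closedBall.1 hy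
      calc ‖y‖ = ‖y - y₀ + y₀‖ := by rw [sub_add_cancel]
        _ ≤ ‖y - y₀‖ + ‖y₀‖ := norm_add_le _ _
        _ ≤ r + 1 := by linarith
    have h0S : (0:ℝ) ∈ S := by
      refine ⟨⟨le_refl 0, zero_le_one⟩, fun τ hτ => ?_⟩
      have : τ = 0 := le_antisymm hτ.2 hτ.1
      rw [this, hf0]
      exact hymem
    have hSne : S.Nonempty := ⟨0, h0S⟩
    have hbdd : BddAbove S := ⟨1, fun s hs => hs.1.2⟩
    set T : ℝ := sSup S with hTdef
    have hT0 : 0 ≤ T := le_csSup hbdd h0S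
    have hT1 : T ≤ 1 := csSup_le hSne fun s hs => hs.1.2
    have hTS : T ∈ S := by
      refine ⟨⟨hT0, hT1⟩, fun τ hτ => ?_⟩
      rcases lt_or_eq_of_le hτ.2 with hlt | heq
      · obtain ⟨s, hsS, hs⟩ := exists_lt_of_lt_csSup hSne hlt
        exact hsS.2 τ ⟨hτ.1, hs.le⟩
      · rcases eq_or_lt_of_le hτ.1 with h0 | h0
        · rw [← h0, hf0]; exact hymem
        · have htd : Tendsto (fun σ => f σ y) (𝓝[<] τ) (𝓝 (f τ y)) :=
            ((hct y).tendsto τ).mono_left nhdsWithin_le_nhds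
          refine isClosed_closedBall.mem_of_tendsto htd ?_
          filter_upwards [Ioo_mem_nhdsLT h0] with σ hσ
          obtain ⟨s, hsS, hs⟩ := exists_lt_of_lt_csSup hSne (heq ▸ hσ.2)
          exact hsS.2 σ ⟨hσ.1.le, hs.le⟩
    have hhalf : ∀ τ ∈ Icc 0 T, dist (f τ y) (c τ) ≤ 1/2 := by
      intro τ hτ
      have hg := gron y hy T ⟨hT0, hT1⟩
        (fun σ hσ => closedBall_subset_closedBall (by rw [hRdef]; linarith) (hTS.2 σ hσ)) τ hτ
      refine hg.trans ?_
      have hLτ : (L:ℝ) * τ ≤ (L:ℝ) := by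
        have hτ1 : τ ≤ 1 := hτ.2.trans hT1
        nlinarith [L.coe_nonneg, hτ.1]
      calc ε * Real.exp ((L:ℝ)*τ) ≤ ε * Real.exp (L:ℝ) :=
            mul_le_mul_of_nonneg_left (Real.exp_le_exp.2 hLτ) hε0.le
        _ ≤ 1/2 := hεe
    have hT_eq : T = 1 := by
      by_contra hne
      have hTlt : T < 1 := lt_of_le_of_ne hT1 hne
      have hfT : f T y ∈ ball (0:E) (r+1) := by
        have h1 := hhalf T ⟨hT0, le_refl T⟩
        have h2 : ‖c T‖ ≤ r := hr T ⟨hT0, hT1⟩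
        rw [mem_ball, dist_zero_right]
        calc ‖f T y‖ = ‖(f T y - c T) + c T‖ := by rw [sub_add_cancel]
          _ ≤ ‖f T y - c T‖ + ‖c T‖ := norm_add_le _ _
          _ ≤ 1/2 + r := by
              have := h1; rw [dist_eq_norm] at this; linarith
          _ < r + 1 := by linarith
      have hball : ∀ᶠ σ in 𝓝 T, f σ y ∈ closedBall (0:E) (r+1) := by
        have := (hct y).continuousAt (x := T) |>.eventually_mem (isOpen_ball.mem_nhds hfT)
        filter_upwards [this] with σ hσ using ball_subset_closedBall hσ
      obtain ⟨δ, hδ0, hδ⟩ := Metric.eventually_nhds_iff.1 hball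
      set T' : ℝ := min 1 (T + δ/2) with hT'def
      have hT'S : T' ∈ S := by
        refine ⟨⟨le_min (by linarith) (by linarith), min_le_left _ _⟩, fun τ hτ => ?_⟩
        rcases le_or_gt τ T with h | h
        · exact hTS.2 τ ⟨hτ.1, h⟩
        · refine hδ ?_
          have hτT' : τ ≤ T + δ/2 := hτ.2.trans (min_le_right _ _)
          rw [Real.dist_eq, abs_of_pos (by linarith)]
          linarith
      have hle : T' ≤ T := le_csSup hbdd hT'S
      have hgt : T < T' := lt_min hTlt (by linarith)
      linarith
    intro s hs
    exact hTS.2 s (hT_eq ▸ hs)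
  have hmemR : ∀ y ∈ closedBall y₀ ε, ∀ s ∈ Icc (0:ℝ) 1, f s y ∈ closedBall (0:E) R :=
    fun y hy s hs => closedBall_subset_closedBall (by rw [hRdef]; linarith) (contain y hy s hs)
  -- Lipschitz estimate for the flow maps
  set C : ℝ≥0 := Real.toNNReal (Real.exp (L:ℝ)) with hCdef
  have hCcoe : (C : ℝ) = Real.exp (L:ℝ) := Real.coe_toNNReal _ (Real.exp_nonneg _)
  have hlipf : ∀ s ∈ Icc (0:ℝ) 1, LipschitzOnWith C (f s) (closedBall y₀ ε) := by
    intro s hs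
    refine LipschitzOnWith.of_dist_le_mul fun y hy z hz => ?_
    have := dist_le_of_trajectories_ODE_of_mem
      (v := fun _ : ℝ => F) (s := fun _ : ℝ => closedBall (0:E) R)
      (K := L) (f := fun τ => f τ y) (g := fun τ => f τ z) (a := 0) (b := s) (δ := dist y z)
      (fun _ _ => hLip)
      (hct y).continuousOn (fun t _ => (hflow t y).hasDerivWithinAt)
      (fun t ht => hmemR y hy t ⟨ht.1, ht.2.le.trans hs.2⟩)
      (hct z).continuousOn (fun t _ => (hflow t z).hasDerivWithinAt)
      (fun t ht => hmemR z hz t ⟨ht.1, ht.2.le.trans hs.2⟩)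
      (by simp [hf0]) s ⟨hs.1, le_refl s⟩
    rw [hCcoe]
    calc dist (f s y) (f s z) ≤ dist y z * Real.exp ((L:ℝ) * (s - 0)) := this
      _ ≤ Real.exp (L:ℝ) * dist y z := by
          rw [mul_comm]
          refine mul_le_mul_of_nonneg_right (Real.exp_le_exp.2 ?_) dist_nonneg
          nlinarith [L.coe_nonneg, hs.1, hs.2]
  have hfdb : ∀ s ∈ Icc (0:ℝ) 1, ∀ y ∈ ball y₀ ε, ‖fderiv ℝ (f s) y‖ ≤ Real.exp (L:ℝ) := by
    intro s hs y hy
    have hnb : closedBall y₀ ε ∈ 𝓝 y :=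
      mem_of_superset (isOpen_ball.mem_nhds hy) ball_subset_closedBall
    have := norm_fderiv_le_of_lipschitzOn ℝ hnb (hlipf s hs)
    rwa [hCcoe] at this
  -- FTC along trajectories
  have hFTC : ∀ s : ℝ, ∀ y : E, f s y - y = ∫ τ in (0:ℝ)..s, F (f τ y) := by
    intro s y
    have h := intervalIntegral.integral_eq_sub_of_hasDerivAt
      (f := fun τ => f τ y) (f' := fun τ => F (f τ y)) (fun τ _ => hflow τ y)
      ((hFc.comp (hct y)).intervalIntegrable 0 s)
    rw [h]
    simp [hf0]
  set A : ℝ → E →L[ℝ] E := fun s => fderiv ℝ (f s) y₀ with hA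
  set G' : ℝ → E →L[ℝ] E := fun τ => (fderiv ℝ F (c τ)).comp (A τ) with hG'
  have hAmeas : MeasureTheory.StronglyMeasurable A :=
    stronglyMeasurable_fderiv_param f hct (fun τ z => hfd τ z) y₀
  have hDFc : Continuous fun τ => fderiv ℝ F (c τ) :=
    (hF.continuous_fderiv two_ne_zero).comp hcc
  have hG'meas : MeasureTheory.StronglyMeasurable G' := by
    have h2 : Continuous fun p : (E →L[ℝ] E) × (E →L[ℝ] E) => p.1.comp p.2 := by
      have := (ContinuousLinearMap.compL ℝ E E E).continuous₂
      simpa [ContinuousLinearMap.compL_apply, Function.uncurry_def] using this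
    exact h2.comp_stronglyMeasurable (hDFc.stronglyMeasurable.prodMk hAmeas)
  have hDFb : ∀ τ ∈ Icc (0:ℝ) 1, ‖fderiv ℝ F (c τ)‖ ≤ (L:ℝ) := by
    intro τ hτ
    have hmem : c τ ∈ ball (0:E) R := by
      rw [mem_ball, dist_zero_right]
      exact lt_of_le_of_lt (hr τ hτ) (by rw [hRdef]; linarith)
    exact norm_fderiv_le_of_lipschitzOn ℝ
      (mem_of_superset (isOpen_ball.mem_nhds hmem) ball_subset_closedBall) hLip
  have hG'b : ∀ τ ∈ Icc (0:ℝ) 1, ‖G' τ‖ ≤ (L:ℝ) * Real.exp (L:ℝ) := by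
    intro τ hτ
    refine (ContinuousLinearMap.opNorm_comp_le _ _).trans ?_
    exact mul_le_mul (hDFb τ hτ) (hfdb τ hτ y₀ (mem_ball_self hε0)) (norm_nonneg _) L.coe_nonneg
  -- the key integral identity
  have key : ∀ s ∈ Icc (0:ℝ) 1,
      A s = ContinuousLinearMap.id ℝ E + ∫ τ in (0:ℝ)..s, G' τ := by
    intro s hs
    have hIsub : Set.uIoc (0:ℝ) s ⊆ Icc (0:ℝ) 1 := by
      rw [uIoc_of_le hs.1]
      exact fun τ hτ => ⟨hτ.1.le, hτ.2.trans hs.2⟩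
    have hlip' : ∀ᵐ τ ∂(volume : Measure ℝ), τ ∈ Set.uIoc (0:ℝ) s →
        LipschitzOnWith (Real.nnabs ((L:ℝ) * Real.exp (L:ℝ))) (fun y => F (f τ y))
          (ball y₀ ε) := by
      refine Filter.Eventually.of_forall fun τ hτ => ?_
      have hτ' : τ ∈ Icc (0:ℝ) 1 := hIsub hτ
      have hmaps : MapsTo (f τ) (ball y₀ ε) (closedBall (0:E) R) :=
        fun z hz => hmemR z (ball_subset_closedBall hz) τ hτ'
      have hcomp := hLip.comp ((hlipf τ hτ').mono ball_subset_closedBall) hmaps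
      refine lipschitzOnWith_weaken hcomp ?_
      rw [← NNReal.coe_le_coe, NNReal.coe_mul, hCcoe, Real.coe_nnabs]
      exact le_abs_self _
    have hdiff' : ∀ᵐ τ ∂(volume : Measure ℝ), τ ∈ Set.uIoc (0:ℝ) s →
        HasFDerivAt (fun y => F (f τ y)) (G' τ) y₀ :=
      Filter.Eventually.of_forall fun τ _ =>
        ((hFd (c τ)).hasFDerivAt.comp y₀ (hfd τ y₀).hasFDerivAt)
    obtain ⟨hint, hderiv⟩ := intervalIntegral.hasFDerivAt_integral_of_dominated_loc_of_lip
      (F := fun y τ => F (f τ y)) (F' := G') (x₀ := y₀)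
      (bound := fun _ => (L:ℝ) * Real.exp (L:ℝ)) (a := 0) (b := s) (μ := volume) (ball_mem_nhds y₀ hε0)
      (Filter.Eventually.of_forall fun y => (hFc.comp (hct y)).aestronglyMeasurable)
      ((hFc.comp (hct y₀)).intervalIntegrable 0 s)
      hG'meas.aestronglyMeasurable hlip' intervalIntegrable_const hdiff'
    have h2 : HasFDerivAt (fun y => f s y - y) (A s - ContinuousLinearMap.id ℝ E) y₀ :=
      (hfd s y₀).hasFDerivAt.sub (hasFDerivAt_id y₀)
    have h3 : (fun y => f s y - y) = fun y => ∫ τ in (0:ℝ)..s, F (f τ y) :=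
      funext fun y => hFTC s y
    rw [h3] at h2
    have h4 := h2.unique hderiv
    rw [sub_eq_iff_eq_add'] at h4
    exact h4
  have hA0 : A 0 = ContinuousLinearMap.id ℝ E := by
    have hfid : f 0 = (id : E → E) := funext hf0
    rw [hA]; simp only [hfid, fderiv_id]
  -- continuity of A within Ici 0 at 0
  have hIccmem : Icc (0:ℝ) 1 ∈ 𝓝[≥] (0:ℝ) :=
    Icc_mem_nhdsGE one_pos
  have hAten : Tendsto A (𝓝[≥] (0:ℝ)) (𝓝 (A 0)) := by
    have h1 : Tendsto (fun u => A u - ContinuousLinearMap.id ℝ E) (𝓝[≥] (0:ℝ)) (𝓝 0) := by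
      apply squeeze_zero_norm' (a := fun u => ((L:ℝ) * Real.exp (L:ℝ)) * |u|)
      · filter_upwards [hIccmem] with u hu
        rw [key u hu, add_sub_cancel_left]
        have := intervalIntegral.norm_integral_le_of_norm_le_const
          (C := (L:ℝ) * Real.exp (L:ℝ)) (f := G') (a := 0) (b := u)
          (fun τ hτ => hG'b τ (by
            rw [uIoc_of_le hu.1] at hτ
            exact ⟨hτ.1.le, hτ.2.trans hu.2⟩))
        simpa using this
      · have hcont2 : Continuous fun u : ℝ => ((L:ℝ) * Real.exp (L:ℝ)) * |u| :=
          continuous_const.mul continuous_abs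
        have h5 := hcont2.tendsto (0:ℝ)
        simp only [abs_zero, mul_zero] at h5
        exact h5.mono_left nhdsWithin_le_nhds
    have h2 := h1.add (tendsto_const_nhds (x := ContinuousLinearMap.id ℝ E)
      (f := 𝓝[≥] (0:ℝ)))
    rw [hA0]
    simpa using h2
  have hG'cont : ContinuousWithinAt G' (Ici (0:ℝ)) 0 := by
    have h1 : Tendsto (fun τ => fderiv ℝ F (c τ)) (𝓝[≥] (0:ℝ)) (𝓝 (fderiv ℝ F (c 0))) :=
      (hDFc.tendsto 0).mono_left nhdsWithin_le_nhds
    have h2 : Continuous fun p : (E →L[ℝ] E) × (E →L[ℝ] E) => p.1.comp p.2 := by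
      have := (ContinuousLinearMap.compL ℝ E E E).continuous₂
      simpa [ContinuousLinearMap.compL_apply, Function.uncurry_def] using this
    have h3 : Tendsto (fun τ => (fderiv ℝ F (c τ), A τ)) (𝓝[≥] (0:ℝ))
        (𝓝 (fderiv ℝ F (c 0), A 0)) := h1.prodMk_nhds hAten
    exact (h2.tendsto _).comp h3
  -- FTC at the left endpoint
  have hFTC0 : HasDerivWithinAt (fun u => ∫ τ in (0:ℝ)..u, G' τ) (G' 0) (Ici (0:ℝ)) 0 :=
    intervalIntegral.integral_hasDerivWithinAt_right
      (IntervalIntegrable.refl) ⟨Icc 0 1, Icc_mem_nhdsGT one_pos, hG'meas.aestronglyMeasurable⟩ (hG'cont.mono Ioi_subset_Ici_self)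
  have hfinal : HasDerivWithinAt A (G' 0) (Ici (0:ℝ)) 0 := by
    refine HasDerivWithinAt.congr_of_eventuallyEq
      ((hFTC0.const_add (ContinuousLinearMap.id ℝ E))) ?_ ?_
    · filter_upwards [hIccmem] with u hu using key u hu
    · exact key 0 ⟨le_refl 0, zero_le_one⟩
  have hG'0 : G' 0 = fderiv ℝ F y₀ := by
    rw [hG']
    simp only [hA0]
    rw [show c 0 = y₀ from hf0 y₀]
    exact ContinuousLinearMap.comp_id _
  rw [hG'0] at hfinal
  exact hfinal


/-- The variational equation at time `0`: the derivative in time of the space-derivative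
of the flow is `DF`. -/
theorem flow_fderiv_hasDerivAt (F : E → E) (hF : ContDiff ℝ 2 F)
    (f : ℝ → E → E) (hf0 : ∀ x : E, f 0 x = x)
    (hflow : ∀ t : ℝ, ∀ x : E, HasDerivAt (fun τ : ℝ => f τ x) (F (f t x)) t)
    (hfC2 : ∀ t : ℝ, ContDiff ℝ 2 (f t)) (y₀ : E) :
    HasDerivAt (fun s => fderiv ℝ (f s) y₀) (fderiv ℝ F y₀) 0 := by
  have hIci := flow_fderiv_hasDerivWithinAt_Ici F hF f hf0 hflow hfC2 y₀
  set g : ℝ → E → E := fun τ => f (-τ) with hg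
  have hg0 : ∀ z : E, g 0 z = z := by intro z; simp [hg, hf0]
  have hgflow : ∀ t : ℝ, ∀ z : E, HasDerivAt (fun τ : ℝ => g τ z) ((fun w => -F w) (g t z)) t := by
    intro t z
    have h := hflow (-t) z
    have h2 := HasDerivAt.scomp (x := t) (g₁ := fun τ : ℝ => f τ z)
      (by simpa using h) (hasDerivAt_neg t)
    simpa [hg, Function.comp_def] using h2
  have hgC2 : ∀ t : ℝ, ContDiff ℝ 2 (g t) := fun t => hfC2 (-t)
  have hIic' := flow_fderiv_hasDerivWithinAt_Ici (fun w => -F w) hF.neg g hg0 hgflow hgC2 y₀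
  have hneg : fderiv ℝ (fun w => -F w) y₀ = -fderiv ℝ F y₀ := fderiv_neg
  rw [hneg] at hIic'
  have hIic : HasDerivWithinAt (fun s => fderiv ℝ (f s) y₀) (fderiv ℝ F y₀) (Iic 0) 0 := by
    have hmap : MapsTo (fun s : ℝ => -s) (Iic (0:ℝ)) (Ici (0:ℝ)) := fun s (hs : s ≤ 0) => show (0:ℝ) ≤ -s from neg_nonneg.2 hs
    have hneg0 : HasDerivWithinAt (fun s : ℝ => -s) (-1 : ℝ) (Iic (0:ℝ)) 0 :=
      (hasDerivAt_neg (0:ℝ)).hasDerivWithinAt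
    have hg' : HasDerivWithinAt (fun s => fderiv ℝ (g s) y₀) (-fderiv ℝ F y₀) (Ici 0)
        ((fun s : ℝ => -s) 0) := by simpa using hIic'
    have := HasDerivWithinAt.scomp (x := (0:ℝ)) hg' hneg0 hmap
    simpa [hg, Function.comp_def, neg_neg] using this
  have := hIic.union hIci
  rw [Iic_union_Ici] at this
  exact hasDerivWithinAt_univ.1 this
end aux



/-- homogeneous adjoint equation.
Fix `x ∈ E` and `ν₀ : E →L[ℝ] ℝ`, and define the adjoint covector along the orbit by
`ν t := ν₀ ∘ D(f (−t))(f t x)`.  Then `t ↦ ν t` is differentiable and satisfies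
`d/dt (ν t) = − (ν t) ∘ DF(f t x)` for all `t ∈ ℝ`. -/
theorem equivariant_divergence_stmt9
    {E : Type*} [NormedAddCommGroup E] [NormedSpace ℝ E] [FiniteDimensional ℝ E]
    (F : E → E) (hF : ContDiff ℝ 2 F)
    (f : ℝ → E → E)
    (hf0 : ∀ x : E, f 0 x = x)
    (hfadd : ∀ s t : ℝ, ∀ x : E, f (s + t) x = f s (f t x))
    (hflow : ∀ t : ℝ, ∀ x : E, HasDerivAt (fun τ : ℝ => f τ x) (F (f t x)) t)
    (hfC2 : ∀ t : ℝ, ContDiff ℝ 2 (f t))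
    (x : E) (ν₀ : E →L[ℝ] ℝ)
    (ν : ℝ → (E →L[ℝ] ℝ))
    (hν : ∀ t : ℝ, ν t = ν₀.comp (fderiv ℝ (f (-t)) (f t x))) :
    ∀ t : ℝ, HasDerivAt ν (-(ν t).comp (fderiv ℝ F (f t x))) t := by
  intro t
  have hfd : ∀ s : ℝ, Differentiable ℝ (f s) := fun s => (hfC2 s).differentiable two_ne_zero
  set y₀ : E := f t x with hy₀
  set A : ℝ → E →L[ℝ] E := fun s => fderiv ℝ (f s) y₀ with hA
  set B : ℝ → E →L[ℝ] E := fun s => fderiv ℝ (f (-s)) (f s y₀) with hB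
  have hid : ∀ s : ℝ, ∀ z : E, f (-s) (f s z) = z := fun s z => by
    rw [← hfadd]; simp [hf0]
  have hid' : ∀ s : ℝ, ∀ z : E, f s (f (-s) z) = z := fun s z => by
    rw [← hfadd]; simp [hf0]
  have hBA : ∀ s : ℝ, (B s).comp (A s) = ContinuousLinearMap.id ℝ E := by
    intro s
    have hcomp := fderiv_comp (𝕜 := ℝ) y₀ (hfd (-s) (f s y₀)) (hfd s y₀)
    have hfun : (f (-s)) ∘ (f s) = (id : E → E) := funext fun z => hid s z
    rw [hfun, fderiv_id] at hcomp
    exact hcomp.symm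
  have hAB : ∀ s : ℝ, (A s).comp (B s) = ContinuousLinearMap.id ℝ E := by
    intro s
    have hcomp := fderiv_comp (𝕜 := ℝ) (f s y₀) (hfd s (f (-s) (f s y₀))) (hfd (-s) (f s y₀))
    have hfun : (f s) ∘ (f (-s)) = (id : E → E) := funext fun z => hid' s z
    rw [hfun, fderiv_id] at hcomp
    rw [hid s y₀] at hcomp
    exact hcomp.symm
  have hunit : ∀ s : ℝ, ∃ u : (E →L[ℝ] E)ˣ,
      (u : E →L[ℝ] E) = A s ∧ ((u⁻¹ : (E →L[ℝ] E)ˣ) : E →L[ℝ] E) = B s := by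
    intro s
    refine ⟨⟨A s, B s, ?_, ?_⟩, rfl, rfl⟩
    · show (A s).comp (B s) = ContinuousLinearMap.id ℝ E
      exact hAB s
    · show (B s).comp (A s) = ContinuousLinearMap.id ℝ E
      exact hBA s
  have hBinv : ∀ s : ℝ, B s = Ring.inverse (A s) := by
    intro s
    obtain ⟨u, hu1, hu2⟩ := hunit s
    rw [← hu1, Ring.inverse_unit, hu2]
  have hA_deriv : HasDerivAt A (fderiv ℝ F y₀) 0 :=
    flow_fderiv_hasDerivAt F hF f hf0 hflow hfC2 y₀
  have hA0 : A 0 = ContinuousLinearMap.id ℝ E := by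
    have hfid : f 0 = (id : E → E) := funext hf0
    rw [hA]; simp only [hfid, fderiv_id]
  have hB0 : B 0 = ContinuousLinearMap.id ℝ E := by
    have hfid : f 0 = (id : E → E) := funext hf0
    rw [hB]
    simp only [neg_zero, hfid, id_eq, fderiv_id]
  have hB_deriv : HasDerivAt B (-(fderiv ℝ F y₀)) 0 := by
    obtain ⟨u0, hu01, hu02⟩ := hunit 0
    have hinv := hasFDerivAt_ringInverse (𝕜 := ℝ) (R := E →L[ℝ] E) u0
    rw [hu01] at hinv
    have hcomp := hinv.comp_hasDerivAt 0 hA_deriv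
    rw [show Ring.inverse ∘ A = B from funext fun s => (hBinv s).symm] at hcomp
    refine hcomp.congr_deriv ?_
    rw [hu02, hB0]
    simp only [ContinuousLinearMap.mulLeftRight_apply, ContinuousLinearMap.neg_apply,
      neg_inj]
    rw [show ContinuousLinearMap.id ℝ E = (1 : E →L[ℝ] E) from rfl, one_mul, mul_one]
  have hcompose : ∀ u : ℝ, ν u = (ν t).comp (B (u - t)) := by
    intro u
    rw [hν u, hν t, ContinuousLinearMap.comp_assoc]
    congr 1
    have e1 : f (u - t) y₀ = f u x := by rw [hy₀, ← hfadd]; ring_nf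
    have e2 : f (-(u - t)) (f u x) = f t x := by rw [← e1, hid, hy₀]
    have e3 : (f (-t)) ∘ (f (-(u - t))) = f (-u) := funext fun z => by
      show f (-t) (f (-(u - t)) z) = f (-u) z
      rw [← hfadd]; ring_nf
    have hcomp := fderiv_comp (𝕜 := ℝ) (f u x) (hfd (-t) (f (-(u - t)) (f u x)))
      (hfd (-(u - t)) (f u x))
    rw [e3, e2] at hcomp
    rw [hcomp, ← e1]
  have hBshift : HasDerivAt (fun u : ℝ => B (u - t)) (-(fderiv ℝ F y₀)) t := by
    have h1 : HasDerivAt (fun u : ℝ => u - t) 1 t := (hasDerivAt_id t).sub_const t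
    have hg : HasDerivAt B (-(fderiv ℝ F y₀)) ((fun u : ℝ => u - t) t) := by
      simpa using hB_deriv
    have := HasDerivAt.scomp (x := t) (h := fun u : ℝ => u - t) hg h1
    simpa [Function.comp_def] using this
  have hL := ((ContinuousLinearMap.compL ℝ E E ℝ) (ν t)).hasFDerivAt.comp_hasDerivAt t hBshift
  have hfinal : HasDerivAt (fun u => (ν t).comp (B (u - t)))
      (-(ν t).comp (fderiv ℝ F y₀)) t := by
    simpa [Function.comp_def, ContinuousLinearMap.compL_apply,
      ContinuousLinearMap.comp_neg] using hL
  exact hfinal.congr_of_eventuallyEq (Filter.Eventually.of_forall hcompose)
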